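/- Energy identity for bandlimited functions: if f : ℝ → ℝ is bandlimited, then the family n ↦ f(n)² indexed by n ∈ ℤ is summable and ∑_{n∈ℤ} f(n)² = ∫_ℝ f(x)² dx. (Hence the RKHS norm induced by the sinc kernel on the space of bandlimited functions coincides with the L² norm.) -/

import Mathlib

open MeasureTheory

/-- The sinc function: `sinc 0 = 1`, `sinc t = sin (π t) / (π t)` otherwise. -/
noncomputable def sinc (t : ℝ) : ℝ :=
  if t = 0 then 1 else Real.sin (Real.pi * t) / (Real.pi * t)

/-- `f : ℝ → ℝ` is bandlimited (to the band `[−1/2, 1/2]`) if it is continuous,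
integrable, square-integrable, and its Fourier transform
`𝓕f(ξ) = ∫ f(x) e^{−2πi x ξ} dx` vanishes for `|ξ| > 1/2`. -/
def Bandlimited (f : ℝ → ℝ) : Prop :=
  Continuous f ∧ Integrable f ∧ MemLp f 2 ∧
    ∀ ξ : ℝ, 1 / 2 < |ξ| →
      (∫ x : ℝ, (f x : ℂ) * Complex.exp (-2 * Real.pi * Complex.I * x * ξ)) = 0

namespace BandlimitedAux

open Real Complex AddCircle
open scoped FourierTransform

instance fact_zero_lt_one_real : Fact ((0:ℝ) < 1) := ⟨one_pos⟩

lemma step0 (f : ℝ → ℝ) (ξ : ℝ) :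
    𝓕 (fun x : ℝ => (f x : ℂ)) ξ
      = ∫ x : ℝ, (f x : ℂ) * Complex.exp (-2 * Real.pi * Complex.I * x * ξ) := by
  rw [Real.fourier_eq']
  congr 1 with x
  rw [smul_eq_mul, mul_comm]
  congr 1
  rw [RCLike.inner_apply, starRingEnd_apply, star_trivial]
  push_cast
  ring_nf
-- vanishing at closed boundary
lemma boundary_zero (g : ℝ → ℂ) (hc : Continuous g) (h0 : ∀ ξ : ℝ, 1/2 < |ξ| → g ξ = 0) :
    ∀ ξ : ℝ, 1/2 ≤ |ξ| → g ξ = 0 := by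
  intro ξ hξ
  rcases eq_or_lt_of_le hξ with h | h
  · -- |ξ| = 1/2
    have hne : ξ ≠ 0 := by intro h0'; rw [h0'] at h; simp at h
    have h1 : Filter.Tendsto (fun t : ℝ => g (t * ξ)) (nhdsWithin (1:ℝ) (Set.Ioi (1:ℝ))) (nhds (g ξ)) := by
      have : Filter.Tendsto (fun t : ℝ => t * ξ) (nhdsWithin (1:ℝ) (Set.Ioi (1:ℝ))) (nhds ξ) := by
        have := (continuous_mul_right ξ).tendsto (1:ℝ)
        simpa using this.mono_left nhdsWithin_le_nhds
      exact (hc.tendsto ξ).comp this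
    have h2 : Filter.Tendsto (fun t : ℝ => g (t * ξ)) (nhdsWithin (1:ℝ) (Set.Ioi (1:ℝ))) (nhds 0) := by
      apply Filter.Tendsto.congr' _ tendsto_const_nhds
      filter_upwards [self_mem_nhdsWithin] with t ht
      rw [h0]
      rw [abs_mul, ← h]
      have : 1 < |t| := lt_of_lt_of_le ht (le_abs_self t)
      nlinarith [abs_nonneg ξ]
    exact (tendsto_nhds_unique h2 h1).symm
  · exact h0 ξ h
lemma fourierCoeff_congr_ae {T : ℝ} [hT : Fact (0 < T)] {f g : AddCircle T → ℂ}
    (h : f =ᵐ[haarAddCircle] g) (n : ℤ) : fourierCoeff f n = fourierCoeff g n := by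
  unfold fourierCoeff
  apply integral_congr_ae
  filter_upwards [h] with t ht
  rw [ht]

lemma parseval_aux (g : ℝ → ℂ) (hgc : Continuous g)
    (hg0 : ∀ ξ : ℝ, 1/2 ≤ |ξ| → g ξ = 0) :
    Summable (fun n : ℤ => ‖fourierCoeff (liftIco 1 (-(1/2)) g) n‖ ^ 2) ∧
    ∑' n : ℤ, ‖fourierCoeff (liftIco 1 (-(1/2)) g) n‖ ^ 2
      = ∫ t : AddCircle 1, ‖liftIco 1 (-(1/2)) g t‖ ^ 2 ∂haarAddCircle := by
  set G : AddCircle 1 → ℂ := liftIco 1 (-(1/2)) g with hGdef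
  have hb : g (-(1/2)) = g (-(1/2) + 1) := by
    have e1 : |(-(1/2):ℝ)| = 1/2 := by
      rw [abs_neg, _root_.abs_of_nonneg (by norm_num : (0:ℝ) ≤ 1/2)]
    have e2 : |(-(1/2)+1:ℝ)| = 1/2 := by
      rw [(by norm_num : (-(1/2)+1:ℝ) = 1/2),
        _root_.abs_of_nonneg (by norm_num : (0:ℝ) ≤ 1/2)]
    rw [hg0 _ e1.ge, hg0 _ e2.ge]
  have hGc : Continuous G := liftIco_continuous hb hgc.continuousOn
  obtain ⟨C, hC⟩ := isCompact_univ.exists_bound_of_continuousOn hGc.continuousOn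
  have hG2 : MemLp G 2 (haarAddCircle) :=
    MemLp.of_bound hGc.aestronglyMeasurable C (Filter.Eventually.of_forall fun x => hC x trivial)
  set F2 := hG2.toLp G with hF2
  have hae := hG2.coeFn_toLp
  have hcoeff := fun n : ℤ => fourierCoeff_congr_ae hae n
  constructor
  · have hsum := ((fourierBasis.repr F2).property).summable (by norm_num)
    simp only [fourierBasis_repr] at hsum
    refine hsum.congr fun n => ?_
    rw [hcoeff n]; norm_num
  · have hint : (∫ t : AddCircle 1, ‖(MemLp.toLp G hG2 : Lp ℂ 2 haarAddCircle) t‖ ^ 2 ∂haarAddCircle)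
        = ∫ t : AddCircle 1, ‖G t‖ ^ 2 ∂haarAddCircle := by
      apply integral_congr_ae
      filter_upwards [hae] with t ht
      rw [ht]
    rw [← hint, ← tsum_sq_fourierCoeff F2]
    exact tsum_congr fun n => by rw [hcoeff n]
lemma coeff_eq_inv (g : ℝ → ℂ) (hg0 : ∀ ξ : ℝ, 1/2 ≤ |ξ| → g ξ = 0) (n : ℤ) :
    fourierCoeff (liftIco 1 (-(1/2)) g) (-n) = 𝓕⁻ g n := by
  rw [fourierCoeff_liftIco_eq, fourierCoeffOn_eq_integral]
  rw [Real.fourierInv_eq']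
  have hab : (-(1/2) : ℝ) + 1 = 1/2 := by norm_num
  rw [hab]
  have h1 : (1/2 : ℝ) - -(1/2) = 1 := by norm_num
  rw [h1]
  rw [one_div_one, one_smul]
  rw [intervalIntegral.integral_of_le (by norm_num : (-(1/2):ℝ) ≤ 1/2)]
  have e1 : (∫ v : ℝ, Complex.exp (↑(2 * π * (inner ℝ v ((n:ℝ)) : ℝ)) * Complex.I) • g v)
      = ∫ x in Set.Ioc (-(1/2):ℝ) (1/2),
          Complex.exp (↑(2 * π * (inner ℝ x ((n:ℝ)) : ℝ)) * Complex.I) • g x := by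
    symm
    apply setIntegral_eq_integral_of_forall_compl_eq_zero
    intro x hx
    rw [hg0 x ?_, smul_zero]
    rcases not_and_or.mp (fun h : -(1/2) < x ∧ x ≤ 1/2 => hx ⟨h.1, h.2⟩) with h | h
    · push_neg at h
      rw [abs_of_nonpos (by linarith)]; linarith
    · push_neg at h
      rw [_root_.abs_of_nonneg (by linarith)]; linarith
  rw [e1]
  apply setIntegral_congr_fun measurableSet_Ioc
  intro x hx
  simp only []
  rw [fourier_coe_apply]
  congr 2
  have h2 : (inner ℝ x ((n:ℝ)) : ℝ) = x * n := by
    rw [RCLike.inner_apply', starRingEnd_apply, star_trivial]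
  rw [h2]
  push_cast
  ring
lemma energy_eq (f : ℝ → ℝ) (hfc : Continuous f) (hfi : Integrable f) (hf2 : MemLp f 2)
    (hgc : Continuous (𝓕 (fun x : ℝ => (f x : ℂ))))
    (hgi : Integrable (𝓕 (fun x : ℝ => (f x : ℂ)))) :
    ∫ x : ℝ, (f x) ^ 2 = ∫ ξ : ℝ, ‖𝓕 (fun x : ℝ => (f x : ℂ)) ξ‖ ^ 2 := by
  set g : ℝ → ℂ := 𝓕 (fun x : ℝ => (f x : ℂ)) with hg
  have hfci : Integrable (fun x : ℝ => (f x : ℂ)) := hfi.ofReal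
  have hinv : ∀ x : ℝ, (𝓕⁻ g) x = (f x : ℂ) := by
    intro x
    rw [hg]
    exact hfci.fourierInv_fourier_eq hgi (Continuous.continuousAt (by continuity))
  -- the double integrand
  have key : (∫ x : ℝ, ((f x : ℂ) * (starRingEnd ℂ) (f x : ℂ)))
      = ∫ ξ : ℝ, ((starRingEnd ℂ) (g ξ) * g ξ) := by
    have hFint : Integrable (fun z : ℝ × ℝ =>
        (f z.1 : ℂ) * (Complex.exp (-(2 * π * (z.2 * z.1)) * Complex.I)
          * (starRingEnd ℂ) (g z.2))) (volume.prod volume) := by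
      have hmeas : AEStronglyMeasurable (fun z : ℝ × ℝ =>
          (f z.1 : ℂ) * (Complex.exp (-(2 * π * (z.2 * z.1)) * Complex.I)
            * (starRingEnd ℂ) (g z.2))) (volume.prod volume) := by
        apply Continuous.aestronglyMeasurable
        have : Continuous fun z : ℝ × ℝ => Complex.exp (-(2 * π * (z.2 * z.1)) * Complex.I) := by
          apply Complex.continuous_exp.comp
          continuity
        continuity
      have hbd : Integrable (fun z : ℝ × ℝ => ‖f z.1‖ * ‖g z.2‖) (volume.prod volume) :=
        hfi.norm.mul_prod hgi.norm
      apply hbd.mono' hmeas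
      apply Filter.Eventually.of_forall
      intro z
      rw [norm_mul, norm_mul]
      have h1 : ‖Complex.exp (-(2 * π * (z.2 * z.1)) * Complex.I)‖ = 1 := by
        rw [show (-(2 * π * (z.2 * z.1)) : ℂ) = ((-(2 * π * (z.2 * z.1)) : ℝ) : ℂ) by push_cast; ring]
        exact Complex.norm_exp_ofReal_mul_I _
      rw [h1, one_mul, RingHomIsometric.norm_map]
      simp [norm_mul, Complex.norm_real]
    have conj_eq : ∀ x : ℝ, (starRingEnd ℂ) ((f x : ℂ))
        = ∫ ξ : ℝ, Complex.exp (-(2 * π * (ξ * x)) * Complex.I) * (starRingEnd ℂ) (g ξ) := by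
      intro x
      rw [← hinv x, Real.fourierInv_eq', ← integral_conj]
      congr 1 with ξ
      rw [smul_eq_mul, map_mul, ← Complex.exp_conj]
      congr 2
      have h2 : (inner ℝ ξ x : ℝ) = ξ * x := by
        rw [RCLike.inner_apply', starRingEnd_apply, star_trivial]
      rw [h2]
      rw [map_mul, Complex.conj_I, Complex.conj_ofReal]
      push_cast
      ring
    calc (∫ x : ℝ, ((f x : ℂ) * (starRingEnd ℂ) (f x : ℂ)))
        = ∫ x : ℝ, ∫ ξ : ℝ, (f x : ℂ) * (Complex.exp (-(2 * π * (ξ * x)) * Complex.I)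
            * (starRingEnd ℂ) (g ξ)) := by
          congr 1 with x
          rw [conj_eq x, ← integral_const_mul]
      _ = ∫ ξ : ℝ, ∫ x : ℝ, (f x : ℂ) * (Complex.exp (-(2 * π * (ξ * x)) * Complex.I)
            * (starRingEnd ℂ) (g ξ)) := integral_integral_swap hFint
      _ = ∫ ξ : ℝ, ((starRingEnd ℂ) (g ξ) * g ξ) := by
          congr 1 with ξ
          have e3 : ∀ x : ℝ, (f x : ℂ) * (Complex.exp (-(2 * π * (ξ * x)) * Complex.I)
              * (starRingEnd ℂ) (g ξ))
              = (Complex.exp (-(2 * π * (ξ * x)) * Complex.I) * (f x : ℂ))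
                  * (starRingEnd ℂ) (g ξ) := fun x => by ring
          simp_rw [e3]
          rw [integral_mul_const]
          rw [mul_comm]
          congr 1
          rw [hg, Real.fourier_eq']
          congr 1 with x
          rw [smul_eq_mul]
          congr 1
          have h2 : (inner ℝ x ξ : ℝ) = x * ξ := by
            rw [RCLike.inner_apply', starRingEnd_apply, star_trivial]
          rw [h2]
          push_cast
          ring
  -- convert to real statement
  have l1 : (∫ x : ℝ, ((f x : ℂ) * (starRingEnd ℂ) (f x : ℂ)))
      = ((∫ x : ℝ, (f x) ^ 2 : ℝ) : ℂ) := by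
    rw [show ((∫ x : ℝ, (f x) ^ 2 : ℝ) : ℂ) = (RCLike.ofReal (∫ x : ℝ, (f x) ^ 2 : ℝ) : ℂ) from rfl,
      ← integral_ofReal]
    congr 1 with x
    show (f x : ℂ) * (starRingEnd ℂ) ((f x : ℂ)) = ((f x ^ 2 : ℝ) : ℂ)
    rw [Complex.conj_ofReal]
    push_cast
    ring
  have r1 : (∫ ξ : ℝ, ((starRingEnd ℂ) (g ξ) * g ξ))
      = ((∫ ξ : ℝ, ‖g ξ‖ ^ 2 : ℝ) : ℂ) := by
    rw [show ((∫ ξ : ℝ, ‖g ξ‖ ^ 2 : ℝ) : ℂ) = (RCLike.ofReal (∫ ξ : ℝ, ‖g ξ‖ ^ 2 : ℝ) : ℂ) from rfl,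
      ← integral_ofReal]
    congr 1 with ξ
    show (starRingEnd ℂ) (g ξ) * g ξ = ((‖g ξ‖ ^ 2 : ℝ) : ℂ)
    rw [mul_comm, Complex.mul_conj, Complex.normSq_eq_norm_sq]
  exact Complex.ofReal_inj.mp (l1.symm.trans (key.trans r1))

end BandlimitedAux
open Real Complex AddCircle BandlimitedAux
open scoped FourierTransform

attribute [local instance] BandlimitedAux.fact_zero_lt_one_real

set_option maxHeartbeats 1000000 in
/-- **P3.** Energy identity for bandlimited functions:
`∑_{n∈ℤ} f(n)² = ∫_ℝ f(x)² dx`. -/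
theorem bandlimited_energy_identity (f : ℝ → ℝ) (hf : Bandlimited f) :
    Summable (fun n : ℤ => (f n) ^ 2) ∧
      (∑' n : ℤ, (f n) ^ 2) = ∫ x : ℝ, (f x) ^ 2 := by
  obtain ⟨hfc, hfi, hf2, hvan⟩ := hf
  set g : ℝ → ℂ := 𝓕 (fun x : ℝ => (f x : ℂ)) with hgdef
  have hg0 : ∀ ξ : ℝ, 1/2 < |ξ| → g ξ = 0 := by
    intro ξ hξ
    rw [hgdef, step0]
    exact hvan ξ hξ
  have hgc : Continuous g :=
    VectorFourier.fourierIntegral_continuous Real.continuous_fourierChar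
      (by exact continuous_inner (𝕜 := ℝ) (E := ℝ)) hfi.ofReal
  have hg0' : ∀ ξ : ℝ, 1/2 ≤ |ξ| → g ξ = 0 := boundary_zero g hgc hg0
  have hgsupp : HasCompactSupport g := by
    apply HasCompactSupport.intro (isCompact_Icc (a := -(1/2 : ℝ)) (b := 1/2))
    intro x hx
    apply hg0' x
    rcases not_and_or.mp (fun h : -(1/2) ≤ x ∧ x ≤ 1/2 => hx ⟨h.1, h.2⟩) with h | h
    · push_neg at h
      rw [abs_of_nonpos (by linarith)]; linarith
    · push_neg at h
      rw [_root_.abs_of_nonneg (by linarith)]; linarith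
  have hgi : Integrable g := hgc.integrable_of_hasCompactSupport hgsupp
  -- inversion at the integers
  have hinv : ∀ x : ℝ, (𝓕⁻ g) x = (f x : ℂ) := fun x =>
    hfi.ofReal.fourierInv_fourier_eq hgi (Continuous.continuousAt (by continuity))
  -- the Fourier coefficients of the periodization are the samples
  have hcoeff : ∀ n : ℤ, fourierCoeff (liftIco 1 (-(1/2)) g) (-n) = ((f n : ℝ) : ℂ) := by
    intro n
    rw [coeff_eq_inv g hg0' n, hinv]
  have hnorm : ∀ n : ℤ, ‖fourierCoeff (liftIco 1 (-(1/2)) g) (-n)‖ ^ 2 = f n ^ 2 := by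
    intro n
    rw [hcoeff n, Complex.norm_real, Real.norm_eq_abs, _root_.sq_abs]
  obtain ⟨hsum, htsum⟩ := parseval_aux g hgc hg0'
  -- circle integral = real integral of ‖g‖²
  have hcirc : (∫ t : AddCircle (1:ℝ), ‖liftIco 1 (-(1/2)) g t‖ ^ 2
        ∂(haarAddCircle : Measure (AddCircle (1:ℝ))))
      = ∫ ξ : ℝ, ‖g ξ‖ ^ 2 := by
    have hvol : (volume : Measure (AddCircle (1:ℝ))) = haarAddCircle := by
      rw [AddCircle.volume_eq_smul_haarAddCircle, ENNReal.ofReal_one, one_smul]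
    rw [← hvol, ← AddCircle.integral_preimage 1 (-(1/2))
      (fun t => ‖liftIco 1 (-(1/2)) g t‖ ^ 2)]
    rw [integral_Ioc_eq_integral_Ioo]
    have heq : ∫ x in Set.Ioo (-(1/2) : ℝ) (-(1/2) + 1), ‖liftIco 1 (-(1/2)) g ↑x‖ ^ 2
        = ∫ x in Set.Ioo (-(1/2) : ℝ) (-(1/2) + 1), ‖g x‖ ^ 2 := by
      apply setIntegral_congr_fun measurableSet_Ioo
      intro x hx
      simp only []
      rw [liftIco_coe_apply (Set.Ioo_subset_Ico_self hx)]
    rw [heq]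
    apply setIntegral_eq_integral_of_forall_compl_eq_zero
    intro x hx
    rw [hg0' x ?_, norm_zero]
    · norm_num
    rcases not_and_or.mp (fun h : -(1/2) < x ∧ x < -(1/2) + 1 => hx ⟨h.1, h.2⟩) with h | h
    · push_neg at h
      rw [abs_of_nonpos (by linarith)]; linarith
    · push_neg at h
      rw [_root_.abs_of_nonneg (by linarith)]; linarith
  -- energy identity on the ℝ side
  have henergy : ∫ x : ℝ, (f x) ^ 2 = ∫ ξ : ℝ, ‖g ξ‖ ^ 2 :=
    energy_eq f hfc hfi hf2 hgc hgi
  constructor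
  · have hsum' : Summable (fun n : ℤ => ‖fourierCoeff (liftIco 1 (-(1/2)) g) (-n)‖ ^ 2) :=
      ((Equiv.neg ℤ).summable_iff).2 hsum
    exact hsum'.congr hnorm
  · calc (∑' n : ℤ, (f n) ^ 2)
        = ∑' n : ℤ, ‖fourierCoeff (liftIco 1 (-(1/2)) g) (-n)‖ ^ 2 :=
          (tsum_congr hnorm).symm
      _ = ∑' n : ℤ, ‖fourierCoeff (liftIco 1 (-(1/2)) g) n‖ ^ 2 :=
          (Equiv.neg ℤ).tsum_eq (fun n => ‖fourierCoeff (liftIco 1 (-(1/2)) g) n‖ ^ 2)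
      _ = ∫ t : AddCircle (1:ℝ), ‖liftIco 1 (-(1/2)) g t‖ ^ 2 ∂haarAddCircle := htsum
      _ = ∫ ξ : ℝ, ‖g ξ‖ ^ 2 := hcirc
      _ = ∫ x : ℝ, (f x) ^ 2 := henergy.symm
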